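/- Let λ be an ℓ-partition, r ∈ ℤ^ℓ a multicharge, and i ∈ ℤ/eℤ. If min{wt_e(ν; w) : (ν; w) in the Ŵ_ℓ-orbit of (λ; r)} ≤ δ_i^r(λ), then λ has no addable i-node relative to r. -/

import Mathlib

/-- A β-set: a subset of ℤ having a maximum element, whose complement has a minimum element. -/
def IsBetaSet (B : Set ℤ) : Prop :=
  (∃ m ∈ B, ∀ x ∈ B, x ≤ m) ∧ (∃ m, m ∉ B ∧ ∀ x, x ∉ B → m ≤ x)

/-- The charge s(B) = |B ∩ ℤ≥0| − |ℤ<0 ∖ B| of a β-set. -/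
noncomputable def charge (B : Set ℤ) : ℤ :=
  ((B ∩ {x : ℤ | 0 ≤ x}).ncard : ℤ) - (({x : ℤ | x < 0} \ B).ncard : ℤ)

/-- B^{+k} = {x + k : x ∈ B}. -/
def shiftSet (B : Set ℤ) (k : ℤ) : Set ℤ := (fun x => x + k) '' B

/-- δ_i(B) for i ∈ ℤ/eℤ. -/
noncomputable def deltaOf (e : ℕ) (i : ZMod e) (B : Set ℤ) : ℤ :=
  ({x : ℤ | x ∈ B ∧ (x : ZMod e) = i ∧ x - 1 ∉ B}.ncard : ℤ)
    - ({x : ℤ | x ∈ B ∧ (x : ZMod e) = i - 1 ∧ x + 1 ∉ B}.ncard : ℤ)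

/-- The i-th component B_i = {a : ae + i ∈ B} of the e-quotient of B. -/
def quotComp (e : ℕ) (B : Set ℤ) (i : ℕ) : Set ℤ :=
  {a : ℤ | a * (e : ℤ) + (i : ℤ) ∈ B}

/-- The e-core of B: ⋃_{i<e} {ae + i : a < s(B_i)}. -/
noncomputable def coreSet (e : ℕ) (B : Set ℤ) : Set ℤ :=
  {x : ℤ | ∃ i < e, ∃ a : ℤ, a < charge (quotComp e B i) ∧ x = a * (e : ℤ) + (i : ℤ)}

/-- The e-weight of B: for each quotient component C = B_i, the a-th term
b_{ia} − s(C) + a equals the number of y ∉ C below the a-th bead b_{ia}, so the inner sum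
counts the pairs (x, y) with x ∈ C, y ∉ C, y < x. -/
noncomputable def wtSet (e : ℕ) (B : Set ℤ) : ℕ :=
  ∑ i ∈ Finset.range e,
    {p : ℤ × ℤ | p.1 ∈ quotComp e B i ∧ p.2 ∉ quotComp e B i ∧ p.2 < p.1}.ncard

/-- υ_j(ae + b) = aeℓ + (ℓ−j)e + b. -/
def upsilon (e ℓ j : ℕ) (x : ℤ) : ℤ :=
  (x - x % (e : ℤ)) * (ℓ : ℤ) + ((ℓ : ℤ) - (j : ℤ)) * (e : ℤ) + x % (e : ℤ)

/-- The Uglov map U(B^{(1)}, …, B^{(ℓ)}) = ⋃_j υ_j(B^{(j)}) (the j-th component of the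
tuple, indexed by Fin ℓ, is B^{(j+1)} of the paper). -/
def uglovU (e ℓ : ℕ) (B : Fin ℓ → Set ℤ) : Set ℤ :=
  ⋃ j : Fin ℓ, upsilon e ℓ (j.1 + 1) '' (B j)

/-- A partition, as a weakly decreasing eventually-zero function ℕ → ℕ
(the value at a being λ_{a+1}). -/
def IsPartitionFun (p : ℕ → ℕ) : Prop :=
  (∀ a b : ℕ, a ≤ b → p b ≤ p a) ∧ ∃ N, ∀ n, N ≤ n → p n = 0

/-- β_t(λ) = {λ_a + t − a : a ≥ 1}. -/
def betaOf (p : ℕ → ℕ) (t : ℤ) : Set ℤ :=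
  {x : ℤ | ∃ a : ℕ, x = (p a : ℤ) + t - ((a : ℤ) + 1)}

-- β⁻¹(B): the unique partition λ with β_{s(B)}(λ) = B (junk value if none exists).
open Classical in
noncomputable def betaInv (B : Set ℤ) : ℕ → ℕ :=
  if h : ∃ p : ℕ → ℕ, IsPartitionFun p ∧ betaOf p (charge B) = B then h.choose
  else fun _ => 0

/-- U(β_t(λ)) for an ℓ-partition λ and multicharge t. -/
def uglovMulti (e ℓ : ℕ) (Λ : Fin ℓ → ℕ → ℕ) (t : Fin ℓ → ℤ) : Set ℤ :=
  uglovU e ℓ (fun j => betaOf (Λ j) (t j))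

/-- U(λ; t) = β⁻¹(U(β_t(λ))). -/
noncomputable def uglovPart (e ℓ : ℕ) (Λ : Fin ℓ → ℕ → ℕ) (t : Fin ℓ → ℤ) : ℕ → ℕ :=
  betaInv (uglovMulti e ℓ Λ t)

/-- core_e(λ; t) = β⁻¹(core_e(U(β_t(λ)))). -/
noncomputable def corePart (e ℓ : ℕ) (Λ : Fin ℓ → ℕ → ℕ) (t : Fin ℓ → ℤ) : ℕ → ℕ :=
  betaInv (coreSet e (uglovMulti e ℓ Λ t))

/-- wt_e(λ; t) = wt_e(U(β_t(λ))). -/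
noncomputable def wtPart (e ℓ : ℕ) (Λ : Fin ℓ → ℕ → ℕ) (t : Fin ℓ → ℤ) : ℕ :=
  wtSet e (uglovMulti e ℓ Λ t)

/-- t ∈ Ā_e^ℓ : t is weakly increasing with last entry at most first entry + e. -/
def memAbar (e : ℕ) {ℓ : ℕ} (t : Fin ℓ → ℤ) : Prop :=
  Monotone t ∧ ∀ i j : Fin ℓ, t j ≤ t i + (e : ℤ)

/-- t ∈ A_e^ℓ : t is weakly increasing with last entry at most first entry + e − 1. -/
def memA (e : ℕ) {ℓ : ℕ} (t : Fin ℓ → ℤ) : Prop :=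
  Monotone t ∧ ∀ i j : Fin ℓ, t j ≤ t i + (e : ℤ) - 1

/-- δ_i^t(λ) = Σ_j δ_i(β_{t_j}(λ^{(j)})). -/
noncomputable def deltaMulti (e ℓ : ℕ) (Λ : Fin ℓ → ℕ → ℕ) (t : Fin ℓ → ℤ) (i : ZMod e) : ℤ :=
  ∑ j : Fin ℓ, deltaOf e i (betaOf (Λ j) (t j))

/-- The Young diagram [λ] of an ℓ-partition, as a set of nodes (a, b, j). -/
def youngSet (ℓ : ℕ) (Λ : Fin ℓ → ℕ → ℕ) : Set (ℕ × ℕ × Fin ℓ) :=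
  {x | 1 ≤ x.1 ∧ 1 ≤ x.2.1 ∧ x.2.1 ≤ Λ x.2.2 (x.1 - 1)}

/-- The multiplicity of i ∈ ℤ/eℤ in the residue multiset res_e^t(λ). -/
noncomputable def resCount (e ℓ : ℕ) (Λ : Fin ℓ → ℕ → ℕ) (t : Fin ℓ → ℤ) (i : ZMod e) : ℕ :=
  {x : ℕ × ℕ × Fin ℓ | x ∈ youngSet ℓ Λ ∧
    (((x.2.1 : ℤ) - (x.1 : ℤ) + t x.2.2 : ℤ) : ZMod e) = i}.ncard

/-- The set of e-weights over the Ŵ_ℓ-orbit of (λ; t). -/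
noncomputable def orbitWeights (e ℓ : ℕ) (Λ : Fin ℓ → ℕ → ℕ) (t : Fin ℓ → ℤ) : Set ℕ :=
  {n : ℕ | ∃ σ : Equiv.Perm (Fin ℓ), ∃ v : Fin ℓ → ℤ,
    n = wtPart e ℓ (fun j => Λ (σ j)) (fun j => t (σ j) + (e : ℤ) * v j)}

section Aux

/-- B contains everything below lo and nothing ≥ hi. -/
def Bdd (B : Set ℤ) (lo hi : ℤ) : Prop :=
  (∀ x : ℤ, x < lo → x ∈ B) ∧ ∀ x ∈ B, x < hi

lemma Bdd.mono {B : Set ℤ} {lo hi lo' hi' : ℤ} (h : Bdd B lo hi) (h1 : lo' ≤ lo)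
    (h2 : hi ≤ hi') : Bdd B lo' hi' :=
  ⟨fun x hx => h.1 x (lt_of_lt_of_le hx h1), fun x hx => lt_of_lt_of_le (h.2 x hx) h2⟩

lemma betaOf_bdd {p : ℕ → ℕ} (hp : IsPartitionFun p) (t : ℤ) :
    ∃ lo hi, Bdd (betaOf p t) lo hi := by
  obtain ⟨N, hN⟩ := hp.2
  refine ⟨t - N - 1, (p 0 : ℤ) + t, ?_, ?_⟩
  · intro x hx
    refine ⟨(t - 1 - x).toNat, ?_⟩
    have h1 : (N : ℤ) ≤ t - 1 - x := by omega
    have h2 : ((t - 1 - x).toNat : ℤ) = t - 1 - x := by omega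
    have := hN (t - 1 - x).toNat (by omega)
    rw [this]
    push_cast
    omega
  · rintro x ⟨a, rfl⟩
    have := hp.1 0 a (Nat.zero_le a)
    push_cast
    omega

lemma lowSet_finite {B : Set ℤ} {lo hi : ℤ} (h : Bdd B lo hi) (m : ℤ) :
    {z : ℤ | z < m ∧ z ∉ B}.Finite := by
  apply (Set.finite_Ico lo m).subset
  rintro z ⟨h1, h2⟩
  exact ⟨by by_contra hc; exact h2 (h.1 z (by omega)), h1⟩

lemma highSet_finite {B : Set ℤ} {lo hi : ℤ} (h : Bdd B lo hi) (m : ℤ) :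
    {x : ℤ | x ∈ B ∧ m ≤ x}.Finite := by
  apply (Set.finite_Ico m hi).subset
  rintro x ⟨h1, h2⟩
  exact ⟨h2, h.2 x h1⟩

/-- the counting lemma: #{z < m : z ∉ B} − #{x ∈ B : x ≥ m} = m − s(B). -/
lemma count_lemma {B : Set ℤ} {lo hi : ℤ} (h : Bdd B lo hi) (m : ℤ) :
    ({z : ℤ | z < m ∧ z ∉ B}.ncard : ℤ) - ({x : ℤ | x ∈ B ∧ m ≤ x}.ncard : ℤ)
      = m - charge B := by
  -- step relation
  have step : ∀ m : ℤ,
      ({z : ℤ | z < m + 1 ∧ z ∉ B}.ncard : ℤ) - ({x : ℤ | x ∈ B ∧ m + 1 ≤ x}.ncard : ℤ)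
        = ({z : ℤ | z < m ∧ z ∉ B}.ncard : ℤ) - ({x : ℤ | x ∈ B ∧ m ≤ x}.ncard : ℤ) + 1 := by
    intro m
    by_cases hm : m ∈ B
    · have e1 : {z : ℤ | z < m + 1 ∧ z ∉ B} = {z : ℤ | z < m ∧ z ∉ B} := by
        ext z; simp only [Set.mem_setOf_eq]
        constructor
        · rintro ⟨h1, h2⟩
          have hzm : z ≠ m := fun hz => h2 (hz ▸ hm)
          exact ⟨by omega, h2⟩
        · rintro ⟨h1, h2⟩; exact ⟨by omega, h2⟩
      have e2 : {x : ℤ | x ∈ B ∧ m ≤ x} = insert m {x : ℤ | x ∈ B ∧ m + 1 ≤ x} := by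
        ext x; simp only [Set.mem_setOf_eq, Set.mem_insert_iff]
        constructor
        · rintro ⟨h1, h2⟩
          rcases eq_or_lt_of_le h2 with h3|h3
          · exact Or.inl h3.symm
          · exact Or.inr ⟨h1, by omega⟩
        · rintro (rfl|⟨h1, h2⟩)
          · exact ⟨hm, le_rfl⟩
          · exact ⟨h1, by omega⟩
      rw [e1, e2, Set.ncard_insert_of_notMem (by simp) (highSet_finite h (m+1))]
      push_cast; ring
    · have e1 : {z : ℤ | z < m + 1 ∧ z ∉ B} = insert m {z : ℤ | z < m ∧ z ∉ B} := by
        ext z; simp only [Set.mem_setOf_eq, Set.mem_insert_iff]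
        constructor
        · rintro ⟨h1, h2⟩
          rcases lt_or_eq_of_le (by omega : z ≤ m) with h3|h3
          · exact Or.inr ⟨h3, h2⟩
          · exact Or.inl h3
        · rintro (rfl|⟨h1, h2⟩)
          · exact ⟨by omega, hm⟩
          · exact ⟨by omega, h2⟩
      have e2 : {x : ℤ | x ∈ B ∧ m + 1 ≤ x} = {x : ℤ | x ∈ B ∧ m ≤ x} := by
        ext x; simp only [Set.mem_setOf_eq]
        constructor
        · rintro ⟨h1, h2⟩; exact ⟨h1, by omega⟩
        · rintro ⟨h1, h2⟩
          refine ⟨h1, ?_⟩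
          rcases eq_or_lt_of_le h2 with h3|h3
          · exact absurd (h3 ▸ h1) hm
          · omega
      rw [e1, e2, Set.ncard_insert_of_notMem (by simp) (lowSet_finite h m)]
      push_cast; ring
  have base : ({z : ℤ | z < 0 ∧ z ∉ B}.ncard : ℤ) - ({x : ℤ | x ∈ B ∧ 0 ≤ x}.ncard : ℤ)
      = - charge B := by
    have e1 : {x : ℤ | x < 0} \ B = {z : ℤ | z < 0 ∧ z ∉ B} := by ext z; simp [Set.mem_diff]
    have e2 : B ∩ {x : ℤ | 0 ≤ x} = {x : ℤ | x ∈ B ∧ 0 ≤ x} := by ext x; simp [Set.mem_inter_iff]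
    rw [charge, e1, e2]; ring
  induction m using Int.induction_on with
  | zero => rw [base]; ring
  | succ k ih => rw [step k, ih]; push_cast; ring
  | pred k ih =>
      have := step (-(k:ℤ) - 1)
      rw [show (-(k:ℤ) - 1 + 1) = -(k:ℤ) by ring] at this
      omega

lemma charge_low {B : Set ℤ} {lo hi : ℤ} (h : Bdd B lo hi) {m : ℤ} (hm : m ≤ lo) :
    ({x : ℤ | x ∈ B ∧ m ≤ x}.ncard : ℤ) = charge B - m := by
  have h1 := count_lemma h m
  have h2 : {z : ℤ | z < m ∧ z ∉ B} = ∅ := by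
    ext z; simp only [Set.mem_setOf_eq, Set.mem_empty_iff_false, iff_false, not_and]
    intro hz hc; exact hc (h.1 z (by omega))
  rw [h2] at h1; simp at h1; omega

end Aux
section Aux2

lemma ncard_diff_diff {A C : Set ℤ} (hA : A.Finite) (hC : C.Finite) :
    (A \ C).ncard = A.ncard - (A ∩ C).ncard := by
  have h1 : A \ C = A \ (A ∩ C) := by ext x; simp only [Set.mem_diff, Set.mem_inter_iff]; tauto
  rw [h1, Set.ncard_diff Set.inter_subset_left (hA.inter_of_left C)]

/-- symmetric-difference charge lemma. -/
lemma sym_lemma {B C : Set ℤ} {lo hi lo' hi' : ℤ} (hB : Bdd B lo hi) (hC : Bdd C lo' hi') :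
    ((B \ C).ncard : ℤ) - ((C \ B).ncard : ℤ) = charge B - charge C := by
  set m := min lo lo' with hm
  have hBm : Bdd B m hi := hB.mono (by omega) le_rfl
  have hCm : Bdd C m hi' := hC.mono (by omega) le_rfl
  have e1 : B \ C = {x : ℤ | x ∈ B ∧ m ≤ x} \ {x : ℤ | x ∈ C ∧ m ≤ x} := by
    ext x
    simp only [Set.mem_diff, Set.mem_setOf_eq]
    constructor
    · rintro ⟨h1, h2⟩
      have : m ≤ x := by by_contra hc; exact h2 (hCm.1 x (by omega))
      exact ⟨⟨h1, this⟩, fun hx => h2 hx.1⟩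
    · rintro ⟨⟨h1, h2⟩, h3⟩
      exact ⟨h1, fun hx => h3 ⟨hx, h2⟩⟩
  have e2 : C \ B = {x : ℤ | x ∈ C ∧ m ≤ x} \ {x : ℤ | x ∈ B ∧ m ≤ x} := by
    ext x
    simp only [Set.mem_diff, Set.mem_setOf_eq]
    constructor
    · rintro ⟨h1, h2⟩
      have : m ≤ x := by by_contra hc; exact h2 (hBm.1 x (by omega))
      exact ⟨⟨h1, this⟩, fun hx => h2 hx.1⟩
    · rintro ⟨⟨h1, h2⟩, h3⟩
      exact ⟨h1, fun hx => h3 ⟨hx, h2⟩⟩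
  have fB := highSet_finite hBm m
  have fC := highSet_finite hCm m
  rw [e1, e2, ncard_diff_diff fB fC, ncard_diff_diff fC fB]
  have hsub1 := Set.ncard_le_ncard (Set.inter_subset_left
      (s := {x : ℤ | x ∈ B ∧ m ≤ x}) (t := {x : ℤ | x ∈ C ∧ m ≤ x})) fB
  have hsub2 := Set.ncard_le_ncard (Set.inter_subset_left
      (s := {x : ℤ | x ∈ C ∧ m ≤ x}) (t := {x : ℤ | x ∈ B ∧ m ≤ x})) fC
  have hinter : ({x : ℤ | x ∈ B ∧ m ≤ x} ∩ {x : ℤ | x ∈ C ∧ m ≤ x}).ncard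
      = ({x : ℤ | x ∈ C ∧ m ≤ x} ∩ {x : ℤ | x ∈ B ∧ m ≤ x}).ncard := by
    rw [Set.inter_comm]
  have c1 := charge_low hBm (le_refl m)
  have c2 := charge_low hCm (le_refl m)
  omega

lemma bdd_image_add {B : Set ℤ} {lo hi : ℤ} (h : Bdd B lo hi) (k : ℤ) :
    Bdd ((fun x => x + k) '' B) (lo + k) (hi + k) := by
  constructor
  · intro x hx
    exact ⟨x - k, h.1 _ (by omega), by ring⟩
  · rintro x ⟨z, hz, rfl⟩
    have := h.2 z hz
    show z + k < hi + k
    omega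

lemma charge_shift {B : Set ℤ} {lo hi : ℤ} (h : Bdd B lo hi) :
    charge ((fun x => x + 1) '' B) = charge B + 1 := by
  have hB1 := bdd_image_add h 1
  have c1 := charge_low hB1 (le_refl (lo + 1))
  have e1 : {x : ℤ | x ∈ (fun x => x + 1) '' B ∧ lo + 1 ≤ x}
      = (fun x => x + 1) '' {x : ℤ | x ∈ B ∧ lo ≤ x} := by
    ext x
    simp only [Set.mem_setOf_eq, Set.mem_image]
    constructor
    · rintro ⟨⟨z, hz, rfl⟩, h2⟩
      exact ⟨z, ⟨hz, by omega⟩, rfl⟩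
    · rintro ⟨z, ⟨hz, h2⟩, rfl⟩
      exact ⟨⟨z, hz, rfl⟩, by omega⟩
  rw [e1, Set.ncard_image_of_injective _ (add_left_injective 1)] at c1
  have c2 := charge_low h (le_refl lo)
  omega

/-- the inversion pair set. -/
def invSet (C : Set ℤ) : Set (ℤ × ℤ) := {p : ℤ × ℤ | p.1 ∈ C ∧ p.2 ∉ C ∧ p.2 < p.1}

lemma invSet_finite {C : Set ℤ} {lo hi : ℤ} (h : Bdd C lo hi) : (invSet C).Finite := by
  apply ((Set.finite_Ico lo hi).prod (Set.finite_Ico lo hi)).subset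
  rintro ⟨x, y⟩ ⟨h1, h2, h3⟩
  have hy : lo ≤ y := by by_contra hc; exact h2 (h.1 y (by omega))
  have hx : x < hi := h.2 x h1
  exact ⟨⟨by omega, hx⟩, ⟨hy, by omega⟩⟩

lemma inv_ge_high {C : Set ℤ} {lo hi : ℤ} (h : Bdd C lo hi) {m : ℤ} (hm : m ∉ C) :
    {x : ℤ | x ∈ C ∧ m ≤ x}.ncard ≤ (invSet C).ncard := by
  have e1 : (fun x : ℤ => (x, m)) '' {x : ℤ | x ∈ C ∧ m ≤ x} ⊆ invSet C := by
    rintro ⟨x, y⟩ ⟨z, ⟨hz, hz2⟩, hzz⟩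
    obtain ⟨rfl, rfl⟩ := Prod.mk.injEq .. ▸ hzz
    have : z ≠ m := fun hc => hm (hc ▸ hz)
    exact ⟨hz, hm, by omega⟩
  calc {x : ℤ | x ∈ C ∧ m ≤ x}.ncard
      = ((fun x : ℤ => (x, m)) '' {x : ℤ | x ∈ C ∧ m ≤ x}).ncard := by
        rw [Set.ncard_image_of_injective]
        intro a b hab
        exact (Prod.mk.injEq .. ▸ hab).1
    _ ≤ (invSet C).ncard := Set.ncard_le_ncard e1 (invSet_finite h)

lemma inv_ge_low {C : Set ℤ} {lo hi : ℤ} (h : Bdd C lo hi) {m : ℤ} (hm : m ∈ C) :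
    {z : ℤ | z < m ∧ z ∉ C}.ncard ≤ (invSet C).ncard := by
  have e1 : (fun z : ℤ => (m, z)) '' {z : ℤ | z < m ∧ z ∉ C} ⊆ invSet C := by
    rintro ⟨x, y⟩ ⟨z, ⟨hz, hz2⟩, hzz⟩
    obtain ⟨rfl, rfl⟩ := Prod.mk.injEq .. ▸ hzz
    exact ⟨hm, hz2, hz⟩
  calc {z : ℤ | z < m ∧ z ∉ C}.ncard
      = ((fun z : ℤ => (m, z)) '' {z : ℤ | z < m ∧ z ∉ C}).ncard := by
        rw [Set.ncard_image_of_injective]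
        intro a b hab
        exact (Prod.mk.injEq .. ▸ hab).2
    _ ≤ (invSet C).ncard := Set.ncard_le_ncard e1 (invSet_finite h)

end Aux2
section Aux3

lemma euclid_unique {e a b c d : ℤ} (he : 0 < e) (hc : 0 ≤ c) (hc2 : c < e)
    (hd : 0 ≤ d) (hd2 : d < e) (h : a * e + c = b * e + d) : a = b ∧ c = d := by
  have h1 : (a - b) * e = d - c := by linear_combination h
  rcases lt_trichotomy a b with h2 | h2 | h2
  · exfalso
    have h3 : (a - b) * e ≤ (-1) * e := mul_le_mul_of_nonneg_right (by omega) he.le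
    linarith
  · subst h2
    exact ⟨rfl, by linarith⟩
  · exfalso
    have h3 : (1 : ℤ) * e ≤ (a - b) * e := mul_le_mul_of_nonneg_right (by omega) he.le
    linarith

def mfun (ℓ : ℕ) (j : Fin ℓ) : ℤ → ℤ := fun a => a * (ℓ : ℤ) + ((ℓ : ℤ) - 1 - (j.1 : ℤ))

lemma mfun_injective (ℓ : ℕ) (hℓ : 0 < ℓ) (j : Fin ℓ) : Function.Injective (mfun ℓ j) := by
  intro a b hab
  have h : a * (ℓ : ℤ) = b * (ℓ : ℤ) := by
    simpa [mfun] using hab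
  exact mul_right_cancel₀ (by exact_mod_cast hℓ.ne') h

lemma quot_uglov {e ℓ : ℕ} (he : 0 < e) (B : Fin ℓ → Set ℤ) {c : ℕ} (hc : c < e) :
    quotComp e (uglovU e ℓ B) c = ⋃ j, mfun ℓ j '' quotComp e (B j) c := by
  have he' : (0 : ℤ) < e := by exact_mod_cast he
  have hc' : (c : ℤ) < e := by exact_mod_cast hc
  ext a
  simp only [quotComp, uglovU, upsilon, Set.mem_setOf_eq, Set.mem_iUnion, Set.mem_image, mfun]
  constructor
  · rintro ⟨j, x, hx, heq⟩
    have hd := Int.mul_ediv_add_emod x e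
    have hr0 : 0 ≤ x % e := Int.emod_nonneg x he'.ne'
    have hr1 : x % e < e := Int.emod_lt_of_pos x he'
    have hxe : x - x % e = e * (x / e) := by linarith
    have hkey : ((x / e) * (ℓ : ℤ) + ((ℓ : ℤ) - 1 - (j.1 : ℤ))) * e + x % e
        = a * e + c := by
      push_cast at heq ⊢
      linear_combination heq - (ℓ : ℤ) * hxe
    obtain ⟨h1, h2⟩ := euclid_unique he' hr0 hr1 (by positivity) hc' hkey
    refine ⟨j, x / e, ?_, h1⟩
    show x / e * (e : ℤ) + (c : ℤ) ∈ B j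
    rw [← h2, show x / e * (e : ℤ) + x % e = x by linear_combination hd]
    exact hx
  · rintro ⟨j, b, hb, rfl⟩
    refine ⟨j, b * e + c, hb, ?_⟩
    have hmod : (b * (e : ℤ) + (c : ℤ)) % e = c := by
      have : (b * (e : ℤ) + (c : ℤ)) % e = ((c : ℤ)) % e := by
        conv_lhs => rw [add_comm]
        exact Int.add_mul_emod_self_right ..
      rw [this]
      exact Int.emod_eq_of_lt (by positivity) hc'
    rw [hmod]
    push_cast
    ring

lemma quot_bdd {B : Set ℤ} {lo hi : ℤ} (h : Bdd B lo hi) {e : ℕ} (he : 0 < e) (c : ℕ)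
    (hc : c < e) : Bdd (quotComp e B c) (-(lo.natAbs : ℤ) - c - 1) ((hi.natAbs : ℤ) + 1) := by
  have he' : (1 : ℤ) ≤ e := by exact_mod_cast he
  have hc0 : (0 : ℤ) ≤ c := Int.natCast_nonneg c
  constructor
  · intro a ha
    show a * (e : ℤ) + (c : ℤ) ∈ B
    have h1 : a * (e : ℤ) ≤ a := by nlinarith
    have h2 : -(lo.natAbs : ℤ) ≤ lo := by omega
    apply h.1
    linarith
  · intro a ha
    have h1 : a * (e : ℤ) + (c : ℤ) < hi := h.2 _ ha
    have h2 : hi ≤ (hi.natAbs : ℤ) := by omega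
    by_cases h3 : 0 ≤ a
    · have h4 : a ≤ a * (e : ℤ) := by nlinarith
      linarith
    · linarith

lemma ncard_biUnion {ℓ : ℕ} (s : Finset (Fin ℓ)) (S : Fin ℓ → Set ℤ)
    (hfin : ∀ j, (S j).Finite)
    (hdisj : ∀ j₁ j₂ : Fin ℓ, j₁ ≠ j₂ → Disjoint (S j₁) (S j₂)) :
    (⋃ j ∈ s, S j).ncard = ∑ j ∈ s, (S j).ncard := by
  induction s using Finset.induction_on with
  | empty => simp
  | @insert a s ha ih =>
      rw [Finset.set_biUnion_insert, Finset.sum_insert ha, ← ih]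
      apply Set.ncard_union_eq
      · rw [Set.disjoint_left]
        intro x hx hx2
        rw [Set.mem_iUnion₂] at hx2
        obtain ⟨j, hj, hxj⟩ := hx2
        exact (hdisj a j (fun hc => ha (hc ▸ hj))).ne_of_mem hx hxj rfl
      · exact hfin a
      · exact Set.Finite.biUnion s.finite_toSet (fun j _ => hfin j)

lemma iUnion_eq_biUnion {ℓ : ℕ} (S : Fin ℓ → Set ℤ) :
    (⋃ j, S j) = ⋃ j ∈ (Finset.univ : Finset (Fin ℓ)), S j := by
  ext x; simp

end Aux3
section Aux4

lemma interleave_bdd {ℓ : ℕ} (hℓ : 0 < ℓ) (P : Fin ℓ → Set ℤ) {lo hi : ℤ}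
    (hP : ∀ j, Bdd (P j) lo hi) : Bdd (⋃ j, mfun ℓ j '' P j) (lo * ℓ) (hi * ℓ) := by
  have hℓ' : (0 : ℤ) < ℓ := by exact_mod_cast hℓ
  constructor
  · intro x hx
    have hd := Int.mul_ediv_add_emod x ℓ
    have hr0 : 0 ≤ x % ℓ := Int.emod_nonneg x hℓ'.ne'
    have hr1 : x % ℓ < ℓ := Int.emod_lt_of_pos x hℓ'
    have hjn : ((ℓ : ℤ) - 1 - x % ℓ).toNat < ℓ := by omega
    refine Set.mem_iUnion.2 ⟨⟨((ℓ : ℤ) - 1 - x % ℓ).toNat, hjn⟩, x / ℓ, ?_, ?_⟩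
    · apply (hP _).1
      rw [Int.ediv_lt_iff_lt_mul hℓ']
      exact hx
    · show x / ℓ * (ℓ : ℤ) + ((ℓ : ℤ) - 1 - ((((ℓ : ℤ) - 1 - x % ℓ).toNat : ℕ) : ℤ)) = x
      have : ((((ℓ : ℤ) - 1 - x % ℓ).toNat : ℕ) : ℤ) = (ℓ : ℤ) - 1 - x % ℓ := by omega
      rw [this]
      linear_combination hd
  · intro x hx
    rw [Set.mem_iUnion] at hx
    obtain ⟨j, a, ha, rfl⟩ := hx
    have h1 : a < hi := (hP j).2 a ha
    have h2 : (0 : ℤ) ≤ (j.1 : ℤ) := Int.natCast_nonneg _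
    have h3 : a * (ℓ : ℤ) ≤ (hi - 1) * ℓ := mul_le_mul_of_nonneg_right (by omega) hℓ'.le
    show a * (ℓ : ℤ) + ((ℓ : ℤ) - 1 - (j.1 : ℤ)) < hi * ℓ
    nlinarith

lemma interleave_charge {ℓ : ℕ} (hℓ : 0 < ℓ) (P : Fin ℓ → Set ℤ) {lo hi : ℤ}
    (hP : ∀ j, Bdd (P j) lo hi) :
    charge (⋃ j, mfun ℓ j '' P j) = ∑ j, charge (P j) := by
  have hℓ' : (0 : ℤ) < ℓ := by exact_mod_cast hℓ
  have hbdd := interleave_bdd hℓ P hP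
  have key := charge_low hbdd (le_refl (lo * ℓ))
  have heq : {x : ℤ | x ∈ (⋃ j, mfun ℓ j '' P j) ∧ lo * ℓ ≤ x}
      = ⋃ j, mfun ℓ j '' {a : ℤ | a ∈ P j ∧ lo ≤ a} := by
    ext x
    simp only [Set.mem_setOf_eq, Set.mem_iUnion, Set.mem_image, mfun]
    constructor
    · rintro ⟨⟨j, a, ha, rfl⟩, hge⟩
      refine ⟨j, a, ⟨ha, ?_⟩, rfl⟩
      by_contra hc
      have h2 : (0 : ℤ) ≤ (j.1 : ℤ) := Int.natCast_nonneg _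
      have h3 : (j.1 : ℤ) < ℓ := by exact_mod_cast j.2
      have h4 : a * (ℓ : ℤ) ≤ (lo - 1) * ℓ := mul_le_mul_of_nonneg_right (by omega) hℓ'.le
      nlinarith
    · rintro ⟨j, a, ⟨ha, hge⟩, rfl⟩
      refine ⟨⟨j, a, ha, rfl⟩, ?_⟩
      have h2 : (0 : ℤ) ≤ (j.1 : ℤ) := Int.natCast_nonneg _
      have h2' : (j.1 : ℤ) < ℓ := by exact_mod_cast j.2
      have h3 : lo * (ℓ : ℤ) ≤ a * ℓ := mul_le_mul_of_nonneg_right hge hℓ'.le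
      linarith
  have hfin : ∀ j : Fin ℓ, (mfun ℓ j '' {a : ℤ | a ∈ P j ∧ lo ≤ a}).Finite :=
    fun j => (highSet_finite (hP j) lo).image _
  have hdisj : ∀ j₁ j₂ : Fin ℓ, j₁ ≠ j₂ →
      Disjoint (mfun ℓ j₁ '' {a : ℤ | a ∈ P j₁ ∧ lo ≤ a})
        (mfun ℓ j₂ '' {a : ℤ | a ∈ P j₂ ∧ lo ≤ a}) := by
    intro j₁ j₂ hne
    rw [Set.disjoint_left]
    rintro x ⟨a, _, rfl⟩ ⟨b, _, hb⟩
    have h2 : (j₁.1 : ℤ) < ℓ := by exact_mod_cast j₁.2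
    have h3 : (j₂.1 : ℤ) < ℓ := by exact_mod_cast j₂.2
    obtain ⟨h4, h5⟩ := euclid_unique hℓ' (by omega : (0:ℤ) ≤ (ℓ:ℤ) - 1 - (j₁.1:ℤ)) (by omega)
      (by omega : (0:ℤ) ≤ (ℓ:ℤ) - 1 - (j₂.1:ℤ)) (by omega) hb.symm
    exact hne (Fin.ext (by omega : j₁.1 = j₂.1))
  have hncard : ({x : ℤ | x ∈ (⋃ j, mfun ℓ j '' P j) ∧ lo * ℓ ≤ x}).ncard
      = ∑ j : Fin ℓ, ({a : ℤ | a ∈ P j ∧ lo ≤ a}).ncard := by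
    rw [heq, iUnion_eq_biUnion, ncard_biUnion _ _ hfin hdisj]
    congr 1
    ext j
    exact Set.ncard_image_of_injective _ (mfun_injective ℓ hℓ j)
  have hterm : ∀ j : Fin ℓ, (({a : ℤ | a ∈ P j ∧ lo ≤ a}).ncard : ℤ) = charge (P j) - lo :=
    fun j => charge_low (hP j) le_rfl
  have hcast : (({x : ℤ | x ∈ (⋃ j, mfun ℓ j '' P j) ∧ lo * ℓ ≤ x}).ncard : ℤ)
      = ∑ j : Fin ℓ, (charge (P j) - lo) := by
    rw [hncard]
    push_cast
    exact Finset.sum_congr rfl (fun j _ => hterm j)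
  rw [hcast] at key
  rw [Finset.sum_sub_distrib, Finset.sum_const, Finset.card_univ, Fintype.card_fin] at key
  simp only [nsmul_eq_mul] at key
  linarith
end Aux4
section Aux5

lemma intCast_zmod_iff {e : ℕ} [NeZero e] (x : ℤ) (c : ZMod e) :
    (x : ZMod e) = c ↔ x % e = c.val := by
  have h2 : ((c.val : ℤ) : ZMod e) = c := by simp [ZMod.natCast_val, ZMod.intCast_cast]
  have h3 : ((c.val : ℤ)) % e = c.val := by
    apply Int.emod_eq_of_lt (by positivity)
    exact_mod_cast ZMod.val_lt c
  constructor
  · intro h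
    rw [← h2, ZMod.intCast_eq_intCast_iff] at h
    rw [show (x % e : ℤ) = (c.val : ℤ) % e from h, h3]
  · intro h
    rw [← h2, ZMod.intCast_eq_intCast_iff]
    show x % e = (c.val : ℤ) % e
    rw [h3, h]

lemma form_emod {e : ℕ} (he : 0 < e) (a : ℤ) {c : ℤ} (h0 : 0 ≤ c) (hc : c < e) :
    (a * e + c) % e = c := by
  have : (a * (e : ℤ) + c) % e = c % e := by
    conv_lhs => rw [add_comm]
    exact Int.add_mul_emod_self_right ..
  rw [this]
  exact Int.emod_eq_of_lt h0 hc

lemma affine_inj {e : ℕ} (he : 0 < e) (c : ℤ) : Function.Injective (fun a : ℤ => a * e + c) := by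
  intro a b hab
  simp only at hab
  have : a * (e : ℤ) = b * e := by linarith
  exact mul_right_cancel₀ (by exact_mod_cast he.ne') this

/-- δ_i(B) in terms of the charges of the two relevant quotient components. -/
lemma deltaOf_eq {e : ℕ} [NeZero e] {B : Set ℤ} {lo hi : ℤ} (h : Bdd B lo hi) (i : ZMod e) :
    deltaOf e i B = charge (quotComp e B i.val) - charge (quotComp e B (i-1).val)
      - (if i.val = 0 then 1 else 0) := by
  have he : 0 < e := Nat.pos_of_ne_zero (NeZero.ne e)
  have he' : (0 : ℤ) < e := by exact_mod_cast he
  set i0 := i.val with hi0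
  set i1 := (i - 1).val with hi1
  have hi0e : i0 < e := ZMod.val_lt i
  have hi1e : i1 < e := ZMod.val_lt (i - 1)
  set P := quotComp e B i0 with hP
  set Q := quotComp e B i1 with hQ
  have hPbdd := quot_bdd h he i0 hi0e
  have hQbdd := quot_bdd h he i1 hi1e
  have hsplit : ((i0 : ℤ) = (i1 : ℤ) + 1) ∨ (i0 = 0 ∧ (i1 : ℤ) = (e : ℤ) - 1) := by
    have hcast : (((i1 : ℤ) + 1 : ℤ) : ZMod e) = i := by
      push_cast
      simp [hi1, ZMod.natCast_val, ZMod.intCast_cast]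
    have hval := (intCast_zmod_iff _ _).1 hcast
    rcases lt_or_eq_of_le (by omega : i1 + 1 ≤ e) with hlt | heq
    · left
      rw [Int.emod_eq_of_lt (by positivity) (by exact_mod_cast hlt)] at hval
      omega
    · right
      have : ((i1 : ℤ) + 1) = (e : ℤ) := by exact_mod_cast heq
      rw [this, Int.emod_self] at hval
      constructor
      · omega
      · omega
  -- the two defining sets of deltaOf
  rcases hsplit with hA | ⟨hB0, hB1⟩
  · -- case i0 = i1 + 1
    have hS1 : {x : ℤ | x ∈ B ∧ (x : ZMod e) = i ∧ x - 1 ∉ B}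
        = (fun a : ℤ => a * e + (i0 : ℤ)) '' (P \ Q) := by
      ext x
      simp only [Set.mem_setOf_eq, Set.mem_image, Set.mem_diff]
      constructor
      · rintro ⟨hxB, hres, hx1⟩
        have hmod : x % e = i0 := (intCast_zmod_iff x i).1 hres
        have hd := Int.mul_ediv_add_emod x e
        refine ⟨x / e, ⟨?_, ?_⟩, by rw [← hmod]; linear_combination hd⟩
        · show x / e * (e : ℤ) + (i0 : ℤ) ∈ B
          rw [show x / e * (e : ℤ) + (i0 : ℤ) = x by rw [← hmod]; linear_combination hd]
          exact hxB
        · show x / e * (e : ℤ) + (i1 : ℤ) ∉ B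
          rw [show x / e * (e : ℤ) + (i1 : ℤ) = x - 1 by
            rw [show (i1 : ℤ) = (i0 : ℤ) - 1 by omega, ← hmod]; linear_combination hd]
          exact hx1
      · rintro ⟨a, ⟨haP, haQ⟩, rfl⟩
        refine ⟨haP, ?_, ?_⟩
        · rw [intCast_zmod_iff]
          exact form_emod he a (by positivity) (by exact_mod_cast hi0e)
        · rw [show a * (e : ℤ) + (i0 : ℤ) - 1 = a * e + (i1 : ℤ) by omega]
          exact haQ
    have hS2 : {x : ℤ | x ∈ B ∧ (x : ZMod e) = i - 1 ∧ x + 1 ∉ B}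
        = (fun a : ℤ => a * e + (i1 : ℤ)) '' (Q \ P) := by
      ext x
      simp only [Set.mem_setOf_eq, Set.mem_image, Set.mem_diff]
      constructor
      · rintro ⟨hxB, hres, hx1⟩
        have hmod : x % e = i1 := (intCast_zmod_iff x (i - 1)).1 hres
        have hd := Int.mul_ediv_add_emod x e
        refine ⟨x / e, ⟨?_, ?_⟩, by rw [← hmod]; linear_combination hd⟩
        · show x / e * (e : ℤ) + (i1 : ℤ) ∈ B
          rw [show x / e * (e : ℤ) + (i1 : ℤ) = x by rw [← hmod]; linear_combination hd]
          exact hxB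
        · show x / e * (e : ℤ) + (i0 : ℤ) ∉ B
          rw [show x / e * (e : ℤ) + (i0 : ℤ) = x + 1 by
            rw [show (i0 : ℤ) = (i1 : ℤ) + 1 by omega, ← hmod]; linear_combination hd]
          exact hx1
      · rintro ⟨a, ⟨haQ, haP⟩, rfl⟩
        refine ⟨haQ, ?_, ?_⟩
        · rw [intCast_zmod_iff]
          exact form_emod he a (by positivity) (by exact_mod_cast hi1e)
        · rw [show a * (e : ℤ) + (i1 : ℤ) + 1 = a * e + (i0 : ℤ) by omega]
          exact haP
    rw [deltaOf, hS1, hS2,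
      Set.ncard_image_of_injective _ (affine_inj he (i0 : ℤ)),
      Set.ncard_image_of_injective _ (affine_inj he (i1 : ℤ))]
    have hsym : ((P \ Q).ncard : ℤ) - ((Q \ P).ncard : ℤ) = charge P - charge Q :=
      sym_lemma hPbdd hQbdd
    have hne : i0 ≠ 0 := by omega
    rw [if_neg hne]
    linarith
  · -- case i0 = 0, i1 = e - 1
    set Q1 := (fun a : ℤ => a + 1) '' Q with hQ1
    have hQ1mem : ∀ a : ℤ, a ∈ Q1 ↔ a - 1 ∈ Q := by
      intro a
      constructor
      · rintro ⟨b, hb, rfl⟩; simpa using hb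
      · intro ha; exact ⟨a - 1, ha, by ring⟩
    have hS1 : {x : ℤ | x ∈ B ∧ (x : ZMod e) = i ∧ x - 1 ∉ B}
        = (fun a : ℤ => a * e + (i0 : ℤ)) '' (P \ Q1) := by
      ext x
      simp only [Set.mem_setOf_eq, Set.mem_image, Set.mem_diff]
      constructor
      · rintro ⟨hxB, hres, hx1⟩
        have hmod : x % e = i0 := (intCast_zmod_iff x i).1 hres
        have hd := Int.mul_ediv_add_emod x e
        refine ⟨x / e, ⟨?_, ?_⟩, by rw [← hmod]; linear_combination hd⟩
        · show x / e * (e : ℤ) + (i0 : ℤ) ∈ B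
          rw [show x / e * (e : ℤ) + (i0 : ℤ) = x by rw [← hmod]; linear_combination hd]
          exact hxB
        · rw [hQ1mem]
          show (x / e - 1) * (e : ℤ) + (i1 : ℤ) ∉ B
          rw [show (x / e - 1) * (e : ℤ) + (i1 : ℤ) = x - 1 by
            rw [hB1, show (i0 : ℤ) = 0 by exact_mod_cast hB0] at *
            linear_combination hd - hmod]
          exact hx1
      · rintro ⟨a, ⟨haP, haQ1⟩, rfl⟩
        refine ⟨haP, ?_, ?_⟩
        · rw [intCast_zmod_iff]
          exact form_emod he a (by positivity) (by exact_mod_cast hi0e)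
        · rw [hQ1mem] at haQ1
          rw [show a * (e : ℤ) + (i0 : ℤ) - 1 = (a - 1) * e + (i1 : ℤ) by
            rw [hB1]; push_cast [hB0]; ring]
          exact haQ1
    have hS2 : {x : ℤ | x ∈ B ∧ (x : ZMod e) = i - 1 ∧ x + 1 ∉ B}
        = (fun a : ℤ => a * e + (i1 : ℤ)) '' {a : ℤ | a ∈ Q ∧ a + 1 ∉ P} := by
      ext x
      simp only [Set.mem_setOf_eq, Set.mem_image]
      constructor
      · rintro ⟨hxB, hres, hx1⟩
        have hmod : x % e = i1 := (intCast_zmod_iff x (i - 1)).1 hres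
        have hd := Int.mul_ediv_add_emod x e
        refine ⟨x / e, ⟨?_, ?_⟩, by rw [← hmod]; linear_combination hd⟩
        · show x / e * (e : ℤ) + (i1 : ℤ) ∈ B
          rw [show x / e * (e : ℤ) + (i1 : ℤ) = x by rw [← hmod]; linear_combination hd]
          exact hxB
        · show (x / e + 1) * (e : ℤ) + (i0 : ℤ) ∉ B
          rw [show (x / e + 1) * (e : ℤ) + (i0 : ℤ) = x + 1 by
            rw [hB1, show (i0 : ℤ) = 0 by exact_mod_cast hB0] at *
            linear_combination hd - hmod]
          exact hx1
      · rintro ⟨a, ⟨haQ, haP⟩, rfl⟩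
        refine ⟨haQ, ?_, ?_⟩
        · rw [intCast_zmod_iff]
          exact form_emod he a (by positivity) (by exact_mod_cast hi1e)
        · rw [show a * (e : ℤ) + (i1 : ℤ) + 1 = (a + 1) * e + (i0 : ℤ) by
            rw [hB1]; push_cast [hB0]; ring]
          exact haP
    have hQ1P : Q1 \ P = (fun a : ℤ => a + 1) '' {a : ℤ | a ∈ Q ∧ a + 1 ∉ P} := by
      ext x
      simp only [Set.mem_diff, Set.mem_image, Set.mem_setOf_eq, hQ1mem]
      constructor
      · rintro ⟨h1, h2⟩
        exact ⟨x - 1, ⟨h1, by rw [show x - 1 + 1 = x by ring]; exact h2⟩, by ring⟩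
      · rintro ⟨a, ⟨h1, h2⟩, rfl⟩
        exact ⟨by simpa using h1, h2⟩
    have hQ1bdd := bdd_image_add hQbdd 1
    rw [deltaOf, hS1, hS2,
      Set.ncard_image_of_injective _ (affine_inj he (i0 : ℤ)),
      Set.ncard_image_of_injective _ (affine_inj he (i1 : ℤ))]
    have hcard2 : {a : ℤ | a ∈ Q ∧ a + 1 ∉ P}.ncard = (Q1 \ P).ncard := by
      rw [hQ1P, Set.ncard_image_of_injective _ (add_left_injective 1)]
    rw [hcard2]
    have hsym : ((P \ Q1).ncard : ℤ) - ((Q1 \ P).ncard : ℤ) = charge P - charge Q1 :=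
      sym_lemma hPbdd hQ1bdd
    have hshift : charge Q1 = charge Q + 1 := charge_shift hQbdd
    rw [if_pos hB0]
    linarith
end Aux5
section Key

lemma key_ineq (e ℓ : ℕ) (he : 2 ≤ e) (hl : 1 ≤ ℓ) (Λ : Fin ℓ → ℕ → ℕ)
    (hΛ : ∀ j, IsPartitionFun (Λ j)) (t : Fin ℓ → ℤ) (i : ZMod e) (j : Fin ℓ) (y : ℤ)
    (hy : y ∈ betaOf (Λ j) (t j)) (hy1 : y + 1 ∉ betaOf (Λ j) (t j))
    (hres : ((y + 1 : ℤ) : ZMod e) = i) :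
    deltaMulti e ℓ Λ t i + 1 ≤ (wtPart e ℓ Λ t : ℤ) := by
  haveI : NeZero e := ⟨by omega⟩
  have he0 : 0 < e := by omega
  have hl0 : 0 < ℓ := by omega
  have he' : (0 : ℤ) < e := by exact_mod_cast he0
  have hl' : (0 : ℤ) < ℓ := by exact_mod_cast hl0
  haveI : Nonempty (Fin ℓ) := ⟨⟨0, hl0⟩⟩
  -- uniform bounds for the components
  choose loF hiF hBF using fun j' => betaOf_bdd (hΛ j') (t j')
  set lo := Finset.univ.inf' Finset.univ_nonempty loF with hlo
  set hi := Finset.univ.sup' Finset.univ_nonempty hiF with hhi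
  have hBu : ∀ j', Bdd (betaOf (Λ j') (t j')) lo hi := fun j' =>
    (hBF j').mono (Finset.inf'_le _ (Finset.mem_univ j'))
      (Finset.le_sup' _ (Finset.mem_univ j'))
  set i0 := i.val with hi0def
  set i1 := (i - 1).val with hi1def
  have hi0e : i0 < e := ZMod.val_lt i
  have hi1e : i1 < e := ZMod.val_lt (i - 1)
  set qlo : ℤ := -(lo.natAbs : ℤ) - e - 1 with hqlo
  set qhi : ℤ := (hi.natAbs : ℤ) + 1 with hqhi
  have hPB : ∀ j', Bdd (quotComp e (betaOf (Λ j') (t j')) i0) qlo qhi := fun j' =>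
    (quot_bdd (hBu j') he0 i0 hi0e).mono (by omega) (by omega)
  have hQB : ∀ j', Bdd (quotComp e (betaOf (Λ j') (t j')) i1) qlo qhi := fun j' =>
    (quot_bdd (hBu j') he0 i1 hi1e).mono (by omega) (by omega)
  -- the two quotient components of the Uglov set
  set U := uglovMulti e ℓ Λ t with hU
  set C0 := quotComp e U i0 with hC0def
  set C1 := quotComp e U i1 with hC1def
  have hC0 : C0 = ⋃ j', mfun ℓ j' '' quotComp e (betaOf (Λ j') (t j')) i0 :=
    quot_uglov he0 _ hi0e
  have hC1 : C1 = ⋃ j', mfun ℓ j' '' quotComp e (betaOf (Λ j') (t j')) i1 :=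
    quot_uglov he0 _ hi1e
  have hC0bdd : Bdd C0 (qlo * ℓ) (qhi * ℓ) := by
    rw [hC0]; exact interleave_bdd hl0 _ hPB
  have hC1bdd : Bdd C1 (qlo * ℓ) (qhi * ℓ) := by
    rw [hC1]; exact interleave_bdd hl0 _ hQB
  have hsC0 : charge C0 = ∑ j', charge (quotComp e (betaOf (Λ j') (t j')) i0) := by
    rw [hC0]; exact interleave_charge hl0 _ hPB
  have hsC1 : charge C1 = ∑ j', charge (quotComp e (betaOf (Λ j') (t j')) i1) := by
    rw [hC1]; exact interleave_charge hl0 _ hQB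
  -- the bead data
  have hymod : y % e = i1 := by
    apply (intCast_zmod_iff y (i - 1)).1
    push_cast at hres ⊢
    linear_combination (hres : ((y : ZMod e) + 1 = i))
  have hy1mod : (y + 1) % e = i0 := (intCast_zmod_iff (y + 1) i).1 hres
  set a1 := y / e with ha1
  set a0 := (y + 1) / e with ha0
  have hy_eq : y = a1 * e + (i1 : ℤ) := by
    have hd := Int.mul_ediv_add_emod y e
    rw [← hymod]; linear_combination -hd
  have hy1_eq : y + 1 = a0 * e + (i0 : ℤ) := by
    have hd := Int.mul_ediv_add_emod (y + 1) e
    rw [← hy1mod]; linear_combination -hd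
  set α := mfun ℓ j a1 with hα
  set β := mfun ℓ j a0 with hβ
  have hαC1 : α ∈ C1 := by
    rw [hC1, Set.mem_iUnion]
    refine ⟨j, a1, ?_, rfl⟩
    show a1 * (e : ℤ) + (i1 : ℤ) ∈ betaOf (Λ j) (t j)
    rw [← hy_eq]; exact hy
  have hβC0 : β ∉ C0 := by
    rw [hC0, Set.mem_iUnion]
    rintro ⟨j', b, hb, hbeq⟩
    have h2 : (j'.1 : ℤ) < ℓ := by exact_mod_cast j'.2
    have h3 : (j.1 : ℤ) < ℓ := by exact_mod_cast j.2
    obtain ⟨hb1, hb2⟩ := euclid_unique hl'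
      (by omega : (0:ℤ) ≤ (ℓ:ℤ) - 1 - (j'.1:ℤ)) (by omega)
      (by omega : (0:ℤ) ≤ (ℓ:ℤ) - 1 - (j.1:ℤ)) (by omega) hbeq
    have hjj : j' = j := Fin.ext (by omega : j'.1 = j.1)
    subst hjj
    subst hb1
    apply hy1
    rw [hy1_eq]
    exact hb
  -- the case split and β - α
  have hsplit : ((i0 : ℤ) = (i1 : ℤ) + 1) ∨ (i0 = 0 ∧ (i1 : ℤ) = (e : ℤ) - 1) := by
    have hcast : (((i1 : ℤ) + 1 : ℤ) : ZMod e) = i := by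
      push_cast
      simp [hi1def, ZMod.natCast_val, ZMod.intCast_cast]
    have hval := (intCast_zmod_iff _ _).1 hcast
    rcases lt_or_eq_of_le (by omega : i1 + 1 ≤ e) with hlt | heq
    · left
      rw [Int.emod_eq_of_lt (by positivity) (by exact_mod_cast hlt)] at hval
      omega
    · right
      have : ((i1 : ℤ) + 1) = (e : ℤ) := by exact_mod_cast heq
      rw [this, Int.emod_self] at hval
      exact ⟨by omega, by omega⟩
  set k : ℤ := if i0 = 0 then 1 else 0 with hk
  have ha01 : a0 = a1 + k := by
    rcases hsplit with hA | ⟨hB0, hB1⟩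
    · have hne : i0 ≠ 0 := by omega
      rw [hk, if_neg hne]
      have : a1 * (e : ℤ) + ((i1 : ℤ) + 1) = a0 * e + (i0 : ℤ) := by
        rw [← hy1_eq, hy_eq]; ring
      rw [hA] at this
      have := mul_right_cancel₀ he'.ne' (by linarith : a1 * (e : ℤ) = a0 * e)
      omega
    · rw [hk, if_pos hB0]
      have : (a1 + 1) * (e : ℤ) = a0 * e + (i0 : ℤ) := by
        rw [← hy1_eq, hy_eq, hB1]; ring
      rw [show ((i0 : ℕ) : ℤ) = 0 by exact_mod_cast hB0] at this
      have := mul_right_cancel₀ he'.ne' (by linarith : (a1 + 1) * (e : ℤ) = a0 * e)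
      omega
  have hβα : β - α = k * ℓ := by
    simp only [hβ, hα, mfun, ha01]; ring
  -- delta in terms of charges
  have hdelta : deltaMulti e ℓ Λ t i = charge C0 - charge C1 - ℓ * k := by
    rw [deltaMulti]
    rw [Finset.sum_congr rfl (fun j' _ => deltaOf_eq (hBu j') i)]
    rw [hsC0, hsC1]
    rw [Finset.sum_sub_distrib, Finset.sum_sub_distrib, Finset.sum_const,
      Finset.card_univ, Fintype.card_fin]
    try simp only [nsmul_eq_mul, hk]
    try push_cast
    try ring
  -- weight lower bounds
  have hI0 : charge C0 - β ≤ ((invSet C0).ncard : ℤ) := by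
    have h1 := inv_ge_high hC0bdd hβC0
    have h2 := count_lemma hC0bdd β
    have h3 : (0 : ℤ) ≤ ({z : ℤ | z < β ∧ z ∉ C0}.ncard : ℤ) := by positivity
    have h4 : ({x : ℤ | x ∈ C0 ∧ β ≤ x}.ncard : ℤ) ≤ ((invSet C0).ncard : ℤ) := by
      exact_mod_cast h1
    linarith
  have hI1 : α - charge C1 + 1 ≤ ((invSet C1).ncard : ℤ) := by
    have h1 := inv_ge_low hC1bdd hαC1
    have h2 := count_lemma hC1bdd α
    have h3 : 1 ≤ ({x : ℤ | x ∈ C1 ∧ α ≤ x}.ncard : ℤ) := by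
      have : ({x : ℤ | x ∈ C1 ∧ α ≤ x}).Nonempty := ⟨α, hαC1, le_rfl⟩
      have hfin := highSet_finite hC1bdd α
      have := (Set.ncard_pos hfin).2 this
      exact_mod_cast this
    have h4 : ({z : ℤ | z < α ∧ z ∉ C1}.ncard : ℤ) ≤ ((invSet C1).ncard : ℤ) := by
      exact_mod_cast h1
    linarith
  -- weight is at least the two inversion counts
  have hwt : (invSet C0).ncard + (invSet C1).ncard ≤ wtPart e ℓ Λ t := by
    have hsub : ({i0, i1} : Finset ℕ) ⊆ Finset.range e := by
      intro c hc
      simp only [Finset.mem_insert, Finset.mem_singleton] at hc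
      rcases hc with rfl | rfl <;> simp [Finset.mem_range, hi0e, hi1e]
    have hne : i0 ≠ i1 := by
      rcases hsplit with hA | ⟨hB0, hB1⟩
      · omega
      · omega
    calc (invSet C0).ncard + (invSet C1).ncard
        = ∑ c ∈ ({i0, i1} : Finset ℕ),
            (invSet (quotComp e U c)).ncard := by
          rw [Finset.sum_pair hne]
      _ ≤ ∑ c ∈ Finset.range e, (invSet (quotComp e U c)).ncard :=
          Finset.sum_le_sum_of_subset hsub
      _ = wtPart e ℓ Λ t := rfl
  have hwt' : ((invSet C0).ncard : ℤ) + ((invSet C1).ncard : ℤ) ≤ (wtPart e ℓ Λ t : ℤ) := by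
    exact_mod_cast hwt
  rw [hdelta]
  linarith

end Key
section Orbit

lemma mem_betaOf_shift {p : ℕ → ℕ} {t c x : ℤ} :
    x ∈ betaOf p (t + c) ↔ x - c ∈ betaOf p t := by
  constructor
  · rintro ⟨a, rfl⟩
    exact ⟨a, by ring⟩
  · rintro ⟨a, ha⟩
    exact ⟨a, by omega⟩

lemma deltaOf_shift (e : ℕ) (i : ZMod e) (p : ℕ → ℕ) (t c : ℤ) :
    deltaOf e i (betaOf p (t + (e : ℤ) * c)) = deltaOf e i (betaOf p t) := by
  have hcast : ∀ x : ℤ, ((x + (e : ℤ) * c : ℤ) : ZMod e) = (x : ZMod e) := by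
    intro x
    push_cast
    simp [ZMod.natCast_self]
  have hS : ∀ d : ZMod e,
      {x : ℤ | x ∈ betaOf p (t + (e : ℤ) * c) ∧ (x : ZMod e) = d ∧ x - 1 ∉ betaOf p (t + (e : ℤ) * c)}
        = (fun x => x + (e : ℤ) * c) '' {x : ℤ | x ∈ betaOf p t ∧ (x : ZMod e) = d ∧ x - 1 ∉ betaOf p t} := by
    intro d
    ext x
    simp only [Set.mem_setOf_eq, Set.mem_image]
    constructor
    · rintro ⟨h1, h2, h3⟩
      refine ⟨x - (e : ℤ) * c, ⟨mem_betaOf_shift.1 h1, ?_, ?_⟩, by ring⟩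
      · rw [← hcast (x - (e:ℤ)*c), show x - (e:ℤ)*c + (e:ℤ)*c = x by ring]
        exact h2
      · intro hc
        apply h3
        rw [show x - 1 = (x - (e:ℤ)*c - 1) + (e : ℤ) * c by ring, mem_betaOf_shift]
        rw [show x - (e:ℤ)*c - 1 + (e:ℤ)*c - (e:ℤ)*c = x - (e:ℤ)*c - 1 by ring]
        exact hc
    · rintro ⟨z, ⟨h1, h2, h3⟩, rfl⟩
      refine ⟨?_, ?_, ?_⟩
      · rw [mem_betaOf_shift, show z + (e:ℤ)*c - (e:ℤ)*c = z by ring]; exact h1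
      · rw [hcast]; exact h2
      · intro hc
        apply h3
        rw [show z + (e:ℤ)*c - 1 = (z - 1) + (e:ℤ)*c by ring, mem_betaOf_shift,
          show z - 1 + (e:ℤ)*c - (e:ℤ)*c = z - 1 by ring] at hc
        exact hc
  have hS2 : ∀ d : ZMod e,
      {x : ℤ | x ∈ betaOf p (t + (e : ℤ) * c) ∧ (x : ZMod e) = d ∧ x + 1 ∉ betaOf p (t + (e : ℤ) * c)}
        = (fun x => x + (e : ℤ) * c) '' {x : ℤ | x ∈ betaOf p t ∧ (x : ZMod e) = d ∧ x + 1 ∉ betaOf p t} := by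
    intro d
    ext x
    simp only [Set.mem_setOf_eq, Set.mem_image]
    constructor
    · rintro ⟨h1, h2, h3⟩
      refine ⟨x - (e : ℤ) * c, ⟨mem_betaOf_shift.1 h1, ?_, ?_⟩, by ring⟩
      · rw [← hcast (x - (e:ℤ)*c), show x - (e:ℤ)*c + (e:ℤ)*c = x by ring]
        exact h2
      · intro hc
        apply h3
        rw [show x + 1 = (x - (e:ℤ)*c + 1) + (e : ℤ) * c by ring, mem_betaOf_shift]
        rw [show x - (e:ℤ)*c + 1 + (e:ℤ)*c - (e:ℤ)*c = x - (e:ℤ)*c + 1 by ring]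
        exact hc
    · rintro ⟨z, ⟨h1, h2, h3⟩, rfl⟩
      refine ⟨?_, ?_, ?_⟩
      · rw [mem_betaOf_shift, show z + (e:ℤ)*c - (e:ℤ)*c = z by ring]; exact h1
      · rw [hcast]; exact h2
      · intro hc
        apply h3
        rw [show z + (e:ℤ)*c + 1 = (z + 1) + (e:ℤ)*c by ring, mem_betaOf_shift,
          show z + 1 + (e:ℤ)*c - (e:ℤ)*c = z + 1 by ring] at hc
        exact hc
  rw [deltaOf, deltaOf, hS i, hS2 (i - 1),
    Set.ncard_image_of_injective _ (add_left_injective ((e : ℤ) * c)),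
    Set.ncard_image_of_injective _ (add_left_injective ((e : ℤ) * c))]

lemma deltaMulti_orbit (e ℓ : ℕ) (Λ : Fin ℓ → ℕ → ℕ) (r : Fin ℓ → ℤ) (i : ZMod e)
    (σ : Equiv.Perm (Fin ℓ)) (v : Fin ℓ → ℤ) :
    deltaMulti e ℓ (fun j => Λ (σ j)) (fun j => r (σ j) + (e : ℤ) * v j) i
      = deltaMulti e ℓ Λ r i := by
  rw [deltaMulti, deltaMulti]
  rw [Finset.sum_congr rfl (fun j _ => deltaOf_shift e i (Λ (σ j)) (r (σ j)) (v j))]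
  exact Equiv.sum_comp σ (fun j => deltaOf e i (betaOf (Λ j) (r j)))

end Orbit
/-- if the minimal e-weight over the Ŵ_ℓ-orbit of (λ; r) is at most δ_i^r(λ),
then λ has no addable i-node relative to r. -/
theorem stmt19 (e ℓ : ℕ) (he : 2 ≤ e) (hl : 1 ≤ ℓ) (Λ : Fin ℓ → ℕ → ℕ)
    (hΛ : ∀ j, IsPartitionFun (Λ j)) (r : Fin ℓ → ℤ) (i : ZMod e)
    (h : ((sInf (orbitWeights e ℓ Λ r) : ℕ) : ℤ) ≤ deltaMulti e ℓ Λ r i) :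
    ¬ ∃ x : ℕ × ℕ × Fin ℓ, x ∉ youngSet ℓ Λ ∧
      (∃ M : Fin ℓ → ℕ → ℕ, (∀ j, IsPartitionFun (M j)) ∧
        youngSet ℓ M = youngSet ℓ Λ ∪ {x}) ∧
      (((x.2.1 : ℤ) - (x.1 : ℤ) + r x.2.2 : ℤ) : ZMod e) = i := by
  rintro ⟨⟨a, b, j⟩, hxnot, ⟨M, hM, hYM⟩, hresx⟩
  simp only at hresx
  have hmem : ∀ (N : Fin ℓ → ℕ → ℕ) (a' b' : ℕ) (j' : Fin ℓ),
      ((a', b', j') ∈ youngSet ℓ N) ↔ (1 ≤ a' ∧ 1 ≤ b' ∧ b' ≤ N j' (a' - 1)) :=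
    fun _ _ _ _ => Iff.rfl
  -- basic facts about the added node
  have hxM : (a, b, j) ∈ youngSet ℓ M := by
    rw [hYM]
    exact Or.inr rfl
  rw [hmem] at hxM
  obtain ⟨ha, hb, hbM⟩ := hxM
  rw [hmem] at hxnot
  have hLam_lt : Λ j (a - 1) < b := by omega
  have hLam_eq : Λ j (a - 1) = b - 1 := by
    rcases Nat.lt_or_ge b 2 with hb2 | hb2
    · omega
    · have hz : (a, b - 1, j) ∈ youngSet ℓ M := (hmem M a (b-1) j).mpr ⟨ha, by omega, by omega⟩
      rw [hYM] at hz
      rcases hz with hz | hz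
      · rw [hmem] at hz
        omega
      · exfalso
        rw [Set.mem_singleton_iff, Prod.ext_iff] at hz
        have := hz.2
        rw [Prod.ext_iff] at this
        have hb1 : b - 1 = b := this.1
        omega
  -- strictness from M being a partition, when a ≥ 2
  have hstrict : 2 ≤ a → Λ j (a - 1) < Λ j (a - 2) := by
    intro ha2
    have hMmono := (hM j).1 (a - 2) (a - 1) (by omega)
    have hz : (a - 1, b, j) ∈ youngSet ℓ M := by
      rw [hmem]
      refine ⟨by omega, hb, ?_⟩
      have e1 : a - 1 - 1 = a - 2 := by omega
      rw [e1]
      omega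
    rw [hYM] at hz
    rcases hz with hz | hz
    · rw [hmem] at hz
      have e1 : a - 1 - 1 = a - 2 := by omega
      rw [e1] at hz
      omega
    · exfalso
      rw [Set.mem_singleton_iff, Prod.ext_iff] at hz
      have ha1 : a - 1 = a := hz.1
      omega
  -- the bead
  set a0 := a - 1 with ha0
  set y : ℤ := (Λ j a0 : ℤ) + r j - ((a0 : ℤ) + 1) with hy
  have hyB : y ∈ betaOf (Λ j) (r j) := ⟨a0, rfl⟩
  have hy1 : y + 1 ∉ betaOf (Λ j) (r j) := by
    rintro ⟨c, hc⟩
    have heq : (Λ j c : ℤ) - (c : ℤ) = (Λ j a0 : ℤ) - (a0 : ℤ) + 1 := by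
      rw [hy] at hc
      omega
    rcases Nat.lt_or_ge c a0 with hlt | hge
    · have h1 : Λ j (a0 - 1) ≤ Λ j c := (hΛ j).1 c (a0 - 1) (by omega)
      have h2 : Λ j a0 < Λ j (a0 - 1) := by
        have := hstrict (by omega)
        have e1 : a - 2 = a0 - 1 := by omega
        rwa [e1] at this
      omega
    · have h1 : Λ j c ≤ Λ j a0 := (hΛ j).1 a0 c hge
      omega
  have hres : ((y + 1 : ℤ) : ZMod e) = i := by
    have hyval : y + 1 = (b : ℤ) - (a : ℤ) + r j := by
      rw [hy]
      have : (Λ j a0 : ℤ) = (b : ℤ) - 1 := by omega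
      rw [this]
      have : ((a0 : ℕ) : ℤ) = (a : ℤ) - 1 := by omega
      rw [this]
      ring
    rw [hyval]
    exact hresx
  -- pass to the orbit element attaining the minimum
  have hne : (orbitWeights e ℓ Λ r).Nonempty := by
    refine ⟨wtPart e ℓ Λ r, Equiv.refl _, fun _ => 0, ?_⟩
    simp
  obtain ⟨σ, v, hsinf⟩ := Nat.sInf_mem hne
  set j2 := σ.symm j with hj2
  have hσj : σ j2 = j := σ.apply_symm_apply j
  have hkey := key_ineq e ℓ he hl (fun j' => Λ (σ j')) (fun j' => hΛ (σ j'))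
    (fun j' => r (σ j') + (e : ℤ) * v j') i j2 (y + (e : ℤ) * v j2) ?_ ?_ ?_
  · rw [deltaMulti_orbit] at hkey
    have hcast := congrArg (fun n : ℕ => (n : ℤ)) hsinf
    linarith
  · show y + (e : ℤ) * v j2 ∈ betaOf (Λ (σ j2)) (r (σ j2) + (e : ℤ) * v j2)
    rw [hσj]
    rw [show r j + (e : ℤ) * v j2 = r j + ((e : ℤ) * v j2) by ring, mem_betaOf_shift]
    rw [show y + (e:ℤ) * v j2 - (e:ℤ) * v j2 = y by ring]
    exact hyB
  · show y + (e : ℤ) * v j2 + 1 ∉ betaOf (Λ (σ j2)) (r (σ j2) + (e : ℤ) * v j2)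
    rw [hσj]
    intro hc
    rw [show r j + (e : ℤ) * v j2 = r j + ((e : ℤ) * v j2) by ring, mem_betaOf_shift] at hc
    rw [show y + (e:ℤ) * v j2 + 1 - (e:ℤ) * v j2 = y + 1 by ring] at hc
    exact hy1 hc
  · show ((y + (e : ℤ) * v j2 + 1 : ℤ) : ZMod e) = i
    rw [show y + (e:ℤ) * v j2 + 1 = (y + 1) + (e:ℤ) * v j2 by ring]
    push_cast
    simp only [ZMod.natCast_self, zero_mul, add_zero]
    push_cast at hres
    exact hres
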